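/- Let I ⊆ (0,∞) be an open interval, let h : I → ℝ be smooth such that f(x) := h′(x) + h(x)/x is nowhere zero on I, let A : ℝ → ℝ be smooth, and let 𝔄 : ℝ → ℝ be smooth with 𝔄′ = A. Then for every smooth solution u : ℝ × I → ℝ of the equation f(x)u_t = (A(u)u_x)_x + h(x)u_x (the case B = 1, f = h_x + h·x^{−1}), the pair F = e^t x f(x)u, G = −e^t(x·A(u)u_x + x·h(x)u − 𝔄(u)) satisfies the conservation-law identity ∂_t F + ∂_x G = 0 at every point of ℝ × I. -/

import Mathlib

open Set Real
open scoped ContDiff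

/-- For the equation `f(x) u_t = (A(u) u_x)_x + h(x) u_x` with
`f = h_x + h/x` nowhere zero on `I ⊆ (0,∞)` (the case `B = 1`, `f = h_x + h x⁻¹`),
the pair `F = e^t x f(x) u`, `G = -e^t (x A(u) u_x + x h(x) u - 𝔄(u))` (where `𝔄' = A`)
is a conserved vector. -/
theorem conservation_law_case_B_one_f_hx_plus_h_over_x
    (I : Set ℝ) (hIopen : IsOpen I) (hIconn : Convex ℝ I) (hIpos : I ⊆ Ioi (0:ℝ))
    (h f : ℝ → ℝ) (hh : ContDiffOn ℝ ∞ h I)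
    (hfdef : ∀ x ∈ I, f x = deriv h x + h x / x)
    (hf0 : ∀ x ∈ I, f x ≠ 0)
    (A FA : ℝ → ℝ) (hA : ContDiff ℝ ∞ A)
    (hFA : ContDiff ℝ ∞ FA) (hFA' : ∀ v : ℝ, HasDerivAt FA (A v) v)
    (u : ℝ → ℝ → ℝ)
    (hu : ContDiffOn ℝ ∞ (fun p : ℝ × ℝ => u p.1 p.2) (univ ×ˢ I))
    (hpde : ∀ t : ℝ, ∀ x ∈ I,
      f x * deriv (fun s => u s x) t
        = deriv (fun y => A (u t y) * deriv (fun z => u t z) y) x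
          + h x * deriv (fun y => u t y) x) :
    ∀ t : ℝ, ∀ x ∈ I,
      deriv (fun s => Real.exp s * x * f x * u s x) t
        + deriv (fun y =>
            -(Real.exp t * (y * A (u t y) * deriv (fun z => u t z) y
                + y * h y * u t y - FA (u t y)))) x = 0 := by
  set U : ℝ × ℝ → ℝ := fun p => u p.1 p.2 with hU
  have hS : IsOpen ((univ : Set ℝ) ×ˢ I) := isOpen_univ.prod hIopen
  have hUdiff : ∀ p ∈ (univ : Set ℝ) ×ˢ I, DifferentiableAt ℝ U p := fun p hp =>
    (hu.differentiableOn (by simp)).differentiableAt (hS.mem_nhds hp)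
  set ux : ℝ × ℝ → ℝ := fun p => fderiv ℝ U p (0, 1) with hux_def
  have hux_smooth : ContDiffOn ℝ ∞ ux ((univ : Set ℝ) ×ˢ I) :=
    (hu.fderiv_of_isOpen hS (le_refl _)).clm_apply contDiffOn_const
  have hcurve : ∀ (t y : ℝ), HasDerivAt (fun z : ℝ => ((t, z) : ℝ × ℝ)) ((0 : ℝ), (1 : ℝ)) y :=
    fun t y => (hasDerivAt_const y t).prodMk (hasDerivAt_id y)
  have hcurve' : ∀ (s x : ℝ), HasDerivAt (fun s : ℝ => ((s, x) : ℝ × ℝ)) ((1 : ℝ), (0 : ℝ)) s :=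
    fun s x => (hasDerivAt_id s).prodMk (hasDerivAt_const s x)
  have hux : ∀ (t : ℝ), ∀ y ∈ I, HasDerivAt (fun z => u t z) (ux (t, y)) y := by
    intro t y hy
    exact (hUdiff (t, y) ⟨trivial, hy⟩).hasFDerivAt.comp_hasDerivAt y (hcurve t y)
  intro t x hx
  have hxpos : (0 : ℝ) < x := hIpos hx
  -- time derivative of u
  have hut : HasDerivAt (fun s => u s x) (fderiv ℝ U (t, x) (1, 0)) t :=
    by exact (hUdiff (t, x) ⟨trivial, hx⟩).hasFDerivAt.comp_hasDerivAt t (hcurve' t x)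
  set UT := fderiv ℝ U (t, x) (1, 0) with hUT
  set p := ux (t, x) with hp
  set a := A (u t x) with ha
  -- second derivative object
  have huxx : HasDerivAt (fun y => ux (t, y)) (fderiv ℝ ux (t, x) (0, 1)) x :=
    ((hux_smooth.differentiableOn (by simp)).differentiableAt
      (hS.mem_nhds ⟨trivial, hx⟩)).hasFDerivAt.comp_hasDerivAt x (hcurve t x)
  set q := fderiv ℝ ux (t, x) (0, 1) with hq
  set ad := deriv A (u t x) with had
  have hAcomp : HasDerivAt (fun y => A (u t y)) (ad * p) x :=
    (((hA.differentiable (by simp)) (u t x)).hasDerivAt).comp x (hux t x hx)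
  have hFAcomp : HasDerivAt (fun y => FA (u t y)) (a * p) x :=
    (hFA' (u t x)).comp x (hux t x hx)
  have hhx : HasDerivAt h (deriv h x) x :=
    ((hh.differentiableOn (by simp)).differentiableAt (hIopen.mem_nhds hx)).hasDerivAt
  -- eventual equality replacing deriv by ux
  have hev : ∀ᶠ y in nhds x, deriv (fun z => u t z) y = ux (t, y) := by
    filter_upwards [hIopen.mem_nhds hx] with y hy
    exact (hux t y hy).deriv
  -- derivative of the inner flux part A(u) u_x (for the PDE)
  have hW : HasDerivAt (fun y => A (u t y) * ux (t, y)) (ad * p * p + a * q) x := by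
    have := hAcomp.mul huxx
    convert this using 1
    all_goals rfl
  have hWeq : deriv (fun y => A (u t y) * deriv (fun z => u t z) y) x
      = ad * p * p + a * q := by
    have hev2 : (fun y => A (u t y) * deriv (fun z => u t z) y)
        =ᶠ[nhds x] fun y => A (u t y) * ux (t, y) := by
      filter_upwards [hev] with y hy; rw [hy]
    rw [hev2.deriv_eq, hW.deriv]
  -- total derivative of G's inner function (nice version)
  have hG : HasDerivAt (fun y =>
      -(Real.exp t * (y * A (u t y) * ux (t, y) + y * h y * u t y - FA (u t y))))
      (-(Real.exp t * (((1 * a + x * (ad * p)) * p + x * a * q)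
        + ((1 * h x + x * deriv h x) * u t x + x * h x * p) - a * p))) x := by
    have h1 : HasDerivAt (fun y => y * A (u t y) * ux (t, y))
        ((1 * a + x * (ad * p)) * p + x * a * q) x :=
      ((hasDerivAt_id x).mul hAcomp).mul huxx
    have h2 : HasDerivAt (fun y => y * h y * u t y)
        ((1 * h x + x * deriv h x) * u t x + x * h x * p) x :=
      ((hasDerivAt_id x).mul hhx).mul (hux t x hx)
    have h3 := (((h1.add h2).sub hFAcomp).const_mul (Real.exp t)).neg
    convert h3 using 1
    all_goals rfl
  have hGev : (fun y =>
      -(Real.exp t * (y * A (u t y) * deriv (fun z => u t z) y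
          + y * h y * u t y - FA (u t y))))
      =ᶠ[nhds x] (fun y =>
      -(Real.exp t * (y * A (u t y) * ux (t, y) + y * h y * u t y - FA (u t y)))) := by
    filter_upwards [hev] with y hy; rw [hy]
  -- derivative of F
  have hF : HasDerivAt (fun s => Real.exp s * x * f x * u s x)
      (Real.exp t * x * f x * u t x + Real.exp t * x * f x * UT) t :=
    (((Real.hasDerivAt_exp t).mul_const x).mul_const (f x)).mul hut
  -- rewrite the PDE
  have hpde' : f x * UT = (ad * p * p + a * q) + h x * p := by
    have := hpde t x hx
    rw [hut.deriv, hWeq, (hux t x hx).deriv] at this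
    exact this
  have hxf : x * f x = x * deriv h x + h x := by
    rw [hfdef x hx]; field_simp
  rw [hF.deriv, hGev.deriv_eq, hG.deriv]
  linear_combination Real.exp t * x * hpde' + Real.exp t * (u t x) * hxf
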